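/- Main result, non-Archimedean case (Theorem 5.1): Let Y be a real vector space, K ⊆ Y a convex cone, H ⊆ Y a convex cone with K ⊆ H, Λ : [0,∞) → K almost normal modulo (K,H), γ the gauge function attached to (H,Λ) (γ(y) := sup {s ∈ [0,∞) : Λ(s) ≤_H y} in the extended reals, sup ∅ = −∞), (X,d) a metric space, ⪰ the quasi-order on X × Y given by (x₁,y₁) ⪰ (x₂,y₂) iff Λ(d(x₁,x₂)) ≤_K y₁ − y₂, and e the semimetric e((x₁,y₁),(x₂,y₂)) = d(x₁,x₂). Let A ⊆ X × Y be nonempty and set Φ(x,y) := γ(y), Dom(Φ) := {(x,y) ∈ A : γ(y) < ∞}. Assume: (i) P_Y(A) ⊆ H; (ii) Dom(Φ) is nonempty; (iii) every ⪰-ascending e-Cauchy sequence contained in Dom(Φ) is bounded above in A modulo ⪰. Then for each (x₀,y₀) ∈ Dom(Φ) there exists (x̄,ȳ) ∈ Dom(Φ) such that (x₀,y₀) ⪰ (x̄,ȳ), and for every (x′,y′) ∈ A with (x̄,ȳ) ⪰ (x′,y′) one has x̄ = x′ and γ(ȳ) = γ(y′). -/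

import Mathlib

/-- The gauge function attached to `(H, Λ)`. -/
noncomputable def conicalGauge {Y : Type*} [AddCommGroup Y] [Module ℝ Y]
    (H : Set Y) (Λ : ℝ → Y) (y : Y) : EReal :=
  sSup ((fun s : ℝ => (s : EReal)) '' {s : ℝ | 0 ≤ s ∧ y - Λ s ∈ H})

/-- The product quasi-order on `X × Y`:
`(x₁,y₁) ⪰ (x₂,y₂)` iff `Λ(d(x₁,x₂)) ≤_K y₁ − y₂`. -/
def prodSucc {Y : Type*} [AddCommGroup Y] [Module ℝ Y]
    (K : Set Y) (Λ : ℝ → Y) {X : Type*} [MetricSpace X]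
    (p q : X × Y) : Prop :=
  p.2 - q.2 - Λ (dist p.1 q.1) ∈ K

/-- Main result, non-Archimedean case (Theorem 5.1). -/
theorem vector_maximal_principle_nonarchimedean
    {Y : Type*} [AddCommGroup Y] [Module ℝ Y]
    (K H : Set Y)
    (hKcone : ∀ a b : ℝ, 0 ≤ a → 0 ≤ b → ∀ x ∈ K, ∀ y ∈ K, a • x + b • y ∈ K)
    (hHcone : ∀ a b : ℝ, 0 ≤ a → 0 ≤ b → ∀ x ∈ H, ∀ y ∈ H, a • x + b • y ∈ H)
    (hKH : K ⊆ H)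
    (Λ : ℝ → Y) (hΛmem : ∀ t : ℝ, 0 ≤ t → Λ t ∈ K)
    (hΛ0 : Λ 0 = 0)
    (hΛstrict : ∀ t τ : ℝ, 0 ≤ t → t < τ → Λ τ - Λ t ∈ K \ (-H))
    (hΛsub : ∀ t₁ t₂ : ℝ, 0 ≤ t₁ → 0 ≤ t₂ → (Λ t₁ + Λ t₂) - Λ (t₁ + t₂) ∈ K)
    {X : Type*} [MetricSpace X]
    (A : Set (X × Y)) (hA : A.Nonempty)
    (hPY : ∀ p ∈ A, p.2 ∈ H)
    (hdom : ∃ p ∈ A, conicalGauge H Λ p.2 < ⊤)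
    (hind : ∀ a : ℕ → X × Y,
      (∀ n : ℕ, a n ∈ A ∧ conicalGauge H Λ (a n).2 < ⊤) →
      (∀ n m : ℕ, n ≤ m → prodSucc K Λ (a n) (a m)) →
      (∀ δ : ℝ, 0 < δ → ∃ N : ℕ, ∀ p q : ℕ, N ≤ p → p ≤ q →
        dist (a p).1 (a q).1 ≤ δ) →
      ∃ b ∈ A, ∀ n : ℕ, prodSucc K Λ (a n) b) :
    ∀ p ∈ A, conicalGauge H Λ p.2 < ⊤ →
      ∃ q ∈ A, conicalGauge H Λ q.2 < ⊤ ∧ prodSucc K Λ p q ∧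
        ∀ r ∈ A, prodSucc K Λ q r →
          q.1 = r.1 ∧ conicalGauge H Λ q.2 = conicalGauge H Λ r.2 := by
  classical
  have hK0 : (0 : Y) ∈ K := by have := hΛmem 0 le_rfl; rwa [hΛ0] at this
  have hKadd : ∀ x ∈ K, ∀ y ∈ K, x + y ∈ K := by
    intro x hx y hy
    have := hKcone 1 1 zero_le_one zero_le_one x hx y hy
    simpa using this
  have hHadd : ∀ x ∈ H, ∀ y ∈ H, x + y ∈ H := by
    intro x hx y hy
    have := hHcone 1 1 zero_le_one zero_le_one x hx y hy
    simpa using this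
  set S : Y → Set ℝ := fun y => {s : ℝ | 0 ≤ s ∧ y - Λ s ∈ H} with hSdef
  set g : Y → ℝ := fun y => sSup (S y) with hgdef
  have h0S : ∀ y ∈ H, (0:ℝ) ∈ S y := by
    intro y hy
    refine ⟨le_rfl, ?_⟩
    rw [hΛ0]
    simpa using hy
  have hγcoe : ∀ y, (S y).Nonempty → BddAbove (S y) →
      conicalGauge H Λ y = ((g y : ℝ) : EReal) := by
    intro y hne hbdd
    have hmono : Monotone (fun s : ℝ => (s : EReal)) :=
      fun a b h => EReal.coe_le_coe_iff.2 h
    have hcont : ContinuousAt (fun s : ℝ => (s : EReal)) (sSup (S y)) :=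
      continuous_coe_real_ereal.continuousAt
    exact (hmono.map_csSup_of_continuousAt hcont hne hbdd).symm
  have hγtop : ∀ y, (S y).Nonempty → ¬ BddAbove (S y) → conicalGauge H Λ y = ⊤ := by
    intro y hne hnb
    rw [conicalGauge, sSup_eq_top]
    intro b hb
    induction b with
    | bot =>
        obtain ⟨s, hs⟩ := hne
        exact ⟨s, Set.mem_image_of_mem _ hs, EReal.bot_lt_coe s⟩
    | coe c =>
        obtain ⟨s, hs, hcs⟩ := not_bddAbove_iff.1 hnb c
        exact ⟨s, Set.mem_image_of_mem _ hs, EReal.coe_lt_coe_iff.2 hcs⟩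
    | top => exact absurd hb (lt_irrefl _)
  have hrefl : ∀ q : X × Y, prodSucc K Λ q q := by
    intro q
    unfold prodSucc
    simp [dist_self, hΛ0, hK0]
  have hΛmono : ∀ t τ : ℝ, 0 ≤ t → t ≤ τ → Λ τ - Λ t ∈ K := by
    intro t τ ht h
    rcases eq_or_lt_of_le h with rfl | hlt
    · simpa using hK0
    · exact (hΛstrict t τ ht hlt).1
  have htrans : ∀ p q r : X × Y,
      prodSucc K Λ p q → prodSucc K Λ q r → prodSucc K Λ p r := by
    intro p q r h1 h2
    unfold prodSucc at *
    have hd1 : (0:ℝ) ≤ dist p.1 q.1 := dist_nonneg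
    have hd2 : (0:ℝ) ≤ dist q.1 r.1 := dist_nonneg
    have hd3 : (0:ℝ) ≤ dist p.1 r.1 := dist_nonneg
    have htri : dist p.1 r.1 ≤ dist p.1 q.1 + dist q.1 r.1 := dist_triangle _ _ _
    have h3 : Λ (dist p.1 q.1) + Λ (dist q.1 r.1) - Λ (dist p.1 q.1 + dist q.1 r.1) ∈ K :=
      hΛsub _ _ hd1 hd2
    have h4 : Λ (dist p.1 q.1 + dist q.1 r.1) - Λ (dist p.1 r.1) ∈ K :=
      hΛmono _ _ hd3 htri
    have := hKadd _ (hKadd _ (hKadd _ h1 _ h2) _ h3) _ h4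
    convert this using 1
    abel
  have hkey : ∀ (y z : Y) (d : ℝ), 0 ≤ d → y - z - Λ d ∈ K → ∀ s ∈ S z, s + d ∈ S y := by
    intro y z d hd hm s hs
    refine ⟨add_nonneg hs.1 hd, ?_⟩
    have h1 : y - z - Λ d ∈ H := hKH hm
    have h2 : z - Λ s ∈ H := hs.2
    have h3 : Λ s + Λ d - Λ (s + d) ∈ H := hKH (hΛsub s d hs.1 hd)
    have := hHadd _ (hHadd _ h1 _ h2) _ h3
    convert this using 1
    abel
  have hmono2 : ∀ p q : X × Y, p ∈ A → BddAbove (S p.2) → q ∈ A → prodSucc K Λ p q →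
      BddAbove (S q.2) ∧ g q.2 + dist p.1 q.1 ≤ g p.2 := by
    intro p q hp hbp hq hsc
    have hd : (0:ℝ) ≤ dist p.1 q.1 := dist_nonneg
    have hub : ∀ s ∈ S q.2, s ≤ g p.2 - dist p.1 q.1 := by
      intro s hs
      have hmem := hkey p.2 q.2 _ hd hsc s hs
      have hle : s + dist p.1 q.1 ≤ g p.2 := le_csSup hbp hmem
      linarith
    have hbq : BddAbove (S q.2) := ⟨g p.2 - dist p.1 q.1, hub⟩
    have hne : (S q.2).Nonempty := ⟨0, h0S _ (hPY q hq)⟩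
    have hle : g q.2 ≤ g p.2 - dist p.1 q.1 := csSup_le hne hub
    exact ⟨hbq, by linarith⟩
  have hg0 : ∀ q ∈ A, BddAbove (S q.2) → 0 ≤ g q.2 :=
    fun q hq hb => le_csSup hb (h0S _ (hPY q hq))
  set B : X × Y → ℝ := fun p => sInf ((fun r : X × Y => g r.2) '' {r | r ∈ A ∧ prodSucc K Λ p r})
    with hBdef
  have hTimg : ∀ p : X × Y, p ∈ A → BddAbove (S p.2) →
      ((fun r : X × Y => g r.2) '' {r | r ∈ A ∧ prodSucc K Λ p r}).Nonempty ∧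
      BddBelow ((fun r : X × Y => g r.2) '' {r | r ∈ A ∧ prodSucc K Λ p r}) := by
    intro p hp hb
    constructor
    · exact ⟨g p.2, ⟨p, ⟨hp, hrefl p⟩, rfl⟩⟩
    · refine ⟨0, ?_⟩
      rintro x ⟨r, ⟨hrA, hrs⟩, rfl⟩
      exact hg0 r hrA (hmono2 p r hp hb hrA hrs).1
  have hBle : ∀ p : X × Y, p ∈ A → BddAbove (S p.2) →
      ∀ r, r ∈ A → prodSucc K Λ p r → B p ≤ g r.2 := by
    intro p hp hb r hr1 hr2
    exact csInf_le (hTimg p hp hb).2 ⟨r, ⟨hr1, hr2⟩, rfl⟩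
  have hstep : ∀ p : X × Y, p ∈ A → BddAbove (S p.2) → ∀ n : ℕ,
      ∃ b : X × Y, (b ∈ A ∧ BddAbove (S b.2)) ∧ prodSucc K Λ p b ∧
        g b.2 < B p + (1/2:ℝ)^n := by
    intro p hp hb n
    have hε : (0:ℝ) < (1/2:ℝ)^n := by positivity
    have hlt : B p < B p + (1/2:ℝ)^n := by linarith
    obtain ⟨x, hx, hxlt⟩ := exists_lt_of_csInf_lt (hTimg p hp hb).1 hlt
    obtain ⟨r, hr, rfl⟩ := hx
    exact ⟨r, ⟨hr.1, (hmono2 p r hp hb hr.1 hr.2).1⟩, hr.2, hxlt⟩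
  intro p hpA hpγ
  have hpne : (S p.2).Nonempty := ⟨0, h0S _ (hPY p hpA)⟩
  have hpb : BddAbove (S p.2) := by
    by_contra hnb
    rw [hγtop p.2 hpne hnb] at hpγ
    exact absurd hpγ (lt_irrefl _)
  let D := {x : X × Y // x ∈ A ∧ BddAbove (S x.2)}
  let F : ℕ → D → D := fun n x =>
    ⟨(hstep x.val x.2.1 x.2.2 n).choose, (hstep x.val x.2.1 x.2.2 n).choose_spec.1⟩
  let seq : ℕ → D := fun n => Nat.rec (⟨p, hpA, hpb⟩ : D) F n
  let a : ℕ → X × Y := fun n => (seq n).val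
  have ha0 : a 0 = p := rfl
  have haA : ∀ n, a n ∈ A := fun n => (seq n).2.1
  have haB : ∀ n, BddAbove (S (a n).2) := fun n => (seq n).2.2
  have hasucc : ∀ n, prodSucc K Λ (a n) (a (n+1)) := fun n =>
    (hstep (seq n).val (seq n).2.1 (seq n).2.2 n).choose_spec.2.1
  have hag : ∀ n, g (a (n+1)).2 < B (a n) + (1/2:ℝ)^n := fun n =>
    (hstep (seq n).val (seq n).2.1 (seq n).2.2 n).choose_spec.2.2
  have hasc : ∀ n m, n ≤ m → prodSucc K Λ (a n) (a m) := by
    intro n m hnm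
    induction m, hnm using Nat.le_induction with
    | base => exact hrefl _
    | succ m hnm ih => exact htrans _ _ _ ih (hasucc m)
  have hgd : ∀ n m, n ≤ m → g (a m).2 + dist (a n).1 (a m).1 ≤ g (a n).2 := by
    intro n m h
    exact (hmono2 _ _ (haA n) (haB n) (haA m) (hasc n m h)).2
  have hBlow : ∀ n m, n ≤ m → B (a n) ≤ g (a m).2 := by
    intro n m h
    exact hBle _ (haA n) (haB n) _ (haA m) (hasc n m h)
  have hcauchy : ∀ n pp qq : ℕ, n + 1 ≤ pp → pp ≤ qq →
      dist (a pp).1 (a qq).1 ≤ (1/2:ℝ)^n := by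
    intro n pp qq h1 h2
    have e1 := hgd pp qq h2
    have e2 := hgd (n+1) pp h1
    have e3 := hag n
    have e4 := hBlow n qq (le_trans (Nat.le_succ n) (le_trans h1 h2))
    have e5 : (0:ℝ) ≤ dist (a (n+1)).1 (a pp).1 := dist_nonneg
    linarith
  have hγfin : ∀ n : ℕ, a n ∈ A ∧ conicalGauge H Λ (a n).2 < ⊤ := by
    intro n
    refine ⟨haA n, ?_⟩
    rw [hγcoe _ ⟨0, h0S _ (hPY _ (haA n))⟩ (haB n)]
    exact EReal.coe_lt_top _
  have hCauchy' : ∀ δ : ℝ, 0 < δ → ∃ N : ℕ, ∀ pp qq : ℕ, N ≤ pp → pp ≤ qq →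
      dist (a pp).1 (a qq).1 ≤ δ := by
    intro δ hδ
    obtain ⟨n, hn⟩ := exists_pow_lt_of_lt_one hδ (by norm_num : (1/2:ℝ) < 1)
    exact ⟨n+1, fun pp qq h1 h2 => le_trans (hcauchy n pp qq h1 h2) hn.le⟩
  obtain ⟨b, hbA, hbsucc⟩ := hind a hγfin hasc hCauchy'
  have hpb2 : prodSucc K Λ p b := ha0 ▸ hbsucc 0
  have hbB : BddAbove (S b.2) := (hmono2 p b hpA hpb hbA hpb2).1
  refine ⟨b, hbA, ?_, hpb2, ?_⟩
  · rw [hγcoe _ ⟨0, h0S _ (hPY _ hbA)⟩ hbB]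
    exact EReal.coe_lt_top _
  · intro r hrA hbr
    have hrB : BddAbove (S r.2) := (hmono2 b r hbA hbB hrA hbr).1
    have hdr : g r.2 + dist b.1 r.1 ≤ g b.2 := (hmono2 b r hbA hbB hrA hbr).2
    have hge : g b.2 ≤ g r.2 := by
      refine le_of_forall_pos_le_add ?_
      intro ε hε
      obtain ⟨n, hn⟩ := exists_pow_lt_of_lt_one hε (by norm_num : (1/2:ℝ) < 1)
      have h1 : B (a n) ≤ g r.2 :=
        hBle _ (haA n) (haB n) _ hrA (htrans _ _ _ (hbsucc n) hbr)
      have h2 : g b.2 + dist (a (n+1)).1 b.1 ≤ g (a (n+1)).2 :=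
        (hmono2 _ _ (haA (n+1)) (haB (n+1)) hbA (hbsucc (n+1))).2
      have h3 := hag n
      have h4 : (0:ℝ) ≤ dist (a (n+1)).1 b.1 := dist_nonneg
      linarith [hn.le]
    have hd0 : dist b.1 r.1 = 0 := by
      have : (0:ℝ) ≤ dist b.1 r.1 := dist_nonneg
      linarith
    refine ⟨dist_eq_zero.1 hd0, ?_⟩
    have hgeq : g b.2 = g r.2 := by linarith
    rw [hγcoe _ ⟨0, h0S _ (hPY _ hbA)⟩ hbB, hγcoe _ ⟨0, h0S _ (hPY _ hrA)⟩ hrB, hgeq]
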